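/- Given the exact path differences Δr_{m,n} for at least three elements with index vectors (m, n) such that the 4-column matrix with rows [2dm, 2dn, 2Δr_{m,n}, -(m²+n²)d² + Δr_{m,n}²] has rank 3, the null vector f (up to scale) recovers the parameters via cosφ = f₂/f₃, sinφ cosθ = f₁/f₃ (with appropriate sign conventions) and r = f₃/f₄. -/

import Mathlib

open Matrix

/-- Identifiability from the exact path differences: if the 4-column matrix `P` with rows
`[2dm, 2dn, 2Δr_{m,n}, -(m²+n²)d² + Δr_{m,n}²]` (over at least three element indices)
has rank 3, then any nonzero null vector `f` of `P` recovers the parameters via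
`cosφ = f₂/f₃`, `sinφ cosθ = f₁/f₃`, and `r = f₃/f₄`. -/
theorem stmt_7 {ι : Type*} [Fintype ι] (idx : ι → ℤ × ℤ) (hcard : 3 ≤ Fintype.card ι)
    (r d φ θ : ℝ) (hr : 0 < r) (hd : 0 < d)
    (Δ : ι → ℝ)
    (hΔ : ∀ i, Δ i = Real.sqrt (r ^ 2
        - 2 * d * r * (((idx i).1 : ℝ) * Real.sin φ * Real.cos θ + ((idx i).2 : ℝ) * Real.cos φ)
        + ((((idx i).1 : ℝ)) ^ 2 + (((idx i).2 : ℝ)) ^ 2) * d ^ 2) - r)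
    (P : Matrix ι (Fin 4) ℝ)
    (hP : ∀ i, P i = ![2 * d * ((idx i).1 : ℝ), 2 * d * ((idx i).2 : ℝ), 2 * Δ i,
        -((((idx i).1 : ℝ)) ^ 2 + (((idx i).2 : ℝ)) ^ 2) * d ^ 2 + (Δ i) ^ 2])
    (hrank : P.rank = 3) :
    ∀ f : Fin 4 → ℝ, f ≠ 0 → P *ᵥ f = 0 →
      f 2 ≠ 0 ∧ f 3 ≠ 0 ∧
      Real.cos φ = f 1 / f 2 ∧
      Real.sin φ * Real.cos θ = f 0 / f 2 ∧
      r = f 2 / f 3 := by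
  intro f hf hPf
  set s := Real.sin φ * Real.cos θ with hs
  set c := Real.cos φ with hc
  set v : Fin 4 → ℝ := ![r * s, r * c, r, 1] with hv
  -- v is in the kernel of P
  have hPv : P *ᵥ v = 0 := by
    funext i
    set m : ℝ := ((idx i).1 : ℝ)
    set n : ℝ := ((idx i).2 : ℝ)
    set A : ℝ := r ^ 2 - 2 * d * r * (m * s + n * c) + (m ^ 2 + n ^ 2) * d ^ 2 with hA
    have hsin : Real.sin φ ^ 2 + Real.cos φ ^ 2 = 1 := Real.sin_sq_add_cos_sq φ
    have hsinθ : Real.sin θ ^ 2 + Real.cos θ ^ 2 = 1 := Real.sin_sq_add_cos_sq θ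
    have hA0 : 0 ≤ A := by
      have : A = (r * s - m * d) ^ 2 + (r * c - n * d) ^ 2
          + (r * Real.sin φ * Real.sin θ) ^ 2 := by
        rw [hA, hs, hc]
        linear_combination (-(r ^ 2)) * hsin - r ^ 2 * Real.sin φ ^ 2 * hsinθ
      rw [this]; positivity
    have hΔi : Δ i + r = Real.sqrt A := by
      rw [hΔ i, sub_add_cancel]; congr 1; simp only [hA, m, n, hs]; ring
    have hsq : (Δ i + r) ^ 2 = A := by rw [hΔi, Real.sq_sqrt hA0]
    have : (2 * d * m) * (r * s) + (2 * d * n) * (r * c) + (2 * Δ i) * r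
        + (-(m ^ 2 + n ^ 2) * d ^ 2 + (Δ i) ^ 2) * 1 = 0 := by nlinarith [hsq]
    simp only [Matrix.mulVec, dotProduct, Fin.sum_univ_four, hP i, hv,
      Matrix.cons_val_zero, Matrix.cons_val_one, Matrix.head_cons, Pi.zero_apply,
      Matrix.cons_val_two, Matrix.cons_val_three, Matrix.tail_cons]
    linarith [this]
  have hv3 : v 3 = 1 := rfl
  have hvne : v ≠ 0 := by
    intro h
    have := congrFun h 3
    rw [hv3] at this; simp at this
  -- kernel has dimension 1
  have hker : Module.finrank ℝ (LinearMap.ker P.mulVecLin) = 1 := by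
    have h := LinearMap.finrank_range_add_finrank_ker P.mulVecLin
    rw [Module.finrank_pi] at h
    have : P.rank + Module.finrank ℝ (LinearMap.ker P.mulVecLin) = 4 := by
      simpa [Matrix.rank] using h
    omega
  have hvmem : v ∈ LinearMap.ker P.mulVecLin := by
    simpa [Matrix.mulVecLin] using hPv
  have hfmem : f ∈ LinearMap.ker P.mulVecLin := by
    simpa [Matrix.mulVecLin] using hPf
  have hvne' : (⟨v, hvmem⟩ : LinearMap.ker P.mulVecLin) ≠ 0 := by
    intro h
    exact hvne (congrArg Subtype.val h)
  obtain ⟨t, ht⟩ := (finrank_eq_one_iff_of_nonzero'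
    (⟨v, hvmem⟩ : LinearMap.ker P.mulVecLin) hvne').mp hker ⟨f, hfmem⟩
  have hft : f = t • v := by
    have := congrArg Subtype.val ht
    simpa using this.symm
  have ht0 : t ≠ 0 := by
    intro h; apply hf; rw [hft, h, zero_smul]
  have hf0 : f 0 = t * (r * s) := by rw [hft]; rfl
  have hf1 : f 1 = t * (r * c) := by rw [hft]; rfl
  have hf2 : f 2 = t * r := by rw [hft]; rfl
  have hf3 : f 3 = t := by rw [hft]; simp [hv]
  have hf2ne : f 2 ≠ 0 := by rw [hf2]; exact mul_ne_zero ht0 hr.ne'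
  refine ⟨hf2ne, by rw [hf3]; exact ht0, ?_, ?_, ?_⟩
  · rw [hf1, hf2]; field_simp
  · rw [hf0, hf2]; field_simp
  · rw [hf2, hf3]; field_simp
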